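/- Let r : ℝ → ℝ³ be a differentiable curve and u a unit constant vector such that the unit tangent t(s) = r'(s)/|r'(s)| satisfies t(s)·u = cos ψ for all s, where ψ is a constant with cos ψ ≠ 0. If r is a rational (polynomial) curve whose derivative r' never vanishes, then the speed |r'(s)| is a rational function of s; in particular r'(s)·u = cos ψ · |r'(s)|, so |r'(s)| = (r'(s)·u)/cos ψ is rational. -/

import Mathlib

open Matrix RealInnerProductSpace

/-- Every rational (polynomial) helix is a Pythagorean-hodograph curve: if the unit tangent
of a regular polynomial curve `r` makes a constant angle `ψ` (with `cos ψ ≠ 0`) with a fixed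
unit vector `u`, then the speed `‖r'‖` equals `(r'·u)/cos ψ` and is a rational function. -/
theorem stmt_2 (r : ℝ → EuclideanSpace ℝ (Fin 3)) (u : EuclideanSpace ℝ (Fin 3)) (ψ : ℝ)
    (hdiff : Differentiable ℝ r)
    (hreg : ∀ s, deriv r s ≠ 0)
    (hu : ‖u‖ = 1)
    (hcos : Real.cos ψ ≠ 0)
    (hangle : ∀ s, ⟪(‖deriv r s‖)⁻¹ • deriv r s, u⟫ = Real.cos ψ)
    (hpoly : ∃ P : Fin 3 → Polynomial ℝ, ∀ s i, r s i = (P i).eval s) :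
    (∀ s, ‖deriv r s‖ = ⟪deriv r s, u⟫ / Real.cos ψ) ∧
      ∃ p q : Polynomial ℝ, (∀ s, q.eval s ≠ 0) ∧
        ∀ s, ‖deriv r s‖ = p.eval s / q.eval s := by
  have key : ∀ s, ‖deriv r s‖ = ⟪deriv r s, u⟫ / Real.cos ψ := by
    intro s
    have h := hangle s
    rw [inner_smul_left] at h
    have hn : ‖deriv r s‖ ≠ 0 := norm_ne_zero_iff.mpr (hreg s)
    field_simp at h ⊢
    rw [← h, conj_trivial, one_div, ← mul_assoc, mul_inv_cancel₀ hn, one_mul]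
  refine ⟨key, ?_⟩
  obtain ⟨P, hP⟩ := hpoly
  -- components of deriv r are evaluations of derivative polynomials
  have hcomp : ∀ s i, deriv r s i = ((P i).derivative).eval s := by
    intro s i
    have h1 : HasDerivAt r (deriv r s) s := (hdiff s).hasDerivAt
    have h2 : HasDerivAt (fun t => r t i) (deriv r s i) s := by
      have := ((EuclideanSpace.proj i : EuclideanSpace ℝ (Fin 3) →L[ℝ] ℝ).hasFDerivAt.comp s
        h1.hasFDerivAt).hasDerivAt
      simp at this; exact this
    have h3 : HasDerivAt (fun t => (P i).eval t) ((P i).derivative.eval s) s :=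
      (P i).hasDerivAt s
    have : HasDerivAt (fun t => r t i) ((P i).derivative.eval s) s := by
      simpa [hP] using h3
    exact this.unique h2 ▸ rfl
  refine ⟨Polynomial.C (Real.cos ψ)⁻¹ * ∑ i, (P i).derivative * Polynomial.C (u i), 1,
    fun s => by simp, fun s => ?_⟩
  have hinner : ⟪deriv r s, u⟫ = ∑ i, deriv r s i * u i := by
    simp [PiLp.inner_apply, RCLike.inner_apply]
    exact Finset.sum_congr rfl (fun _ _ => mul_comm _ _)
  rw [key s, hinner]
  simp [hcomp, Polynomial.eval_finset_sum, div_eq_mul_inv, mul_comm]
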